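/- In the Euclidean plane ℝ² (EuclideanSpace ℝ (Fin 2)), fix radii R > 0 and y > 0 and a center t. If p and q are points with dist(t,p) ≤ dist(t,q), then the Lebesgue area of B(t,R) ∩ B(q,y) is at most the Lebesgue area of B(t,R) ∩ B(p,y), where B(c,r) denotes the open ball of radius r around c. That is, the area of intersection of two disks of fixed radii is nonincreasing in the distance between their centers. -/

import Mathlib

open MeasureTheory Metric Set

private lemma minmax_ineq (g h a b : ℝ) (ha : 0 ≤ a) (hab : a ≤ b) :
    min g (b+h) - max (-g) (b-h) ≤ min g (a+h) - max (-g) (a-h) := by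
  rcases le_total g (a+h) with h1|h1 <;> rcases le_total g (b+h) with h2|h2 <;>
  rcases le_total (-g) (a-h) with h3|h3 <;> rcases le_total (-g) (b-h) with h4|h4 <;>
  simp [min_def, max_def] <;> split_ifs <;> linarith

private def Sset (R y c : ℝ) : Set (ℝ × ℝ) :=
  {x | x.1^2 + x.2^2 < R^2 ∧ x.1^2 + (x.2 - c)^2 < y^2}

private lemma Sset_meas (R y c : ℝ) : MeasurableSet (Sset R y c) := by
  apply MeasurableSet.inter
  · exact measurableSet_lt
      ((measurable_fst.pow_const 2).add (measurable_snd.pow_const 2)) measurable_const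
  · exact measurableSet_lt
      ((measurable_fst.pow_const 2).add ((measurable_snd.sub_const c).pow_const 2))
      measurable_const

private lemma slice_eq (R y c x : ℝ) :
    Prod.mk x ⁻¹' Sset R y c =
      Ioo (-(Real.sqrt (R^2 - x^2))) (Real.sqrt (R^2 - x^2)) ∩
      Ioo (c - Real.sqrt (y^2 - x^2)) (c + Real.sqrt (y^2 - x^2)) := by
  ext z
  simp only [Sset, mem_preimage, mem_setOf_eq, mem_inter_iff, mem_Ioo]
  constructor
  · rintro ⟨h1, h2⟩
    have e1 : z^2 < R^2 - x^2 := by linarith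
    have e2 : (z - c)^2 < y^2 - x^2 := by linarith
    rw [Real.sq_lt] at e1 e2
    exact ⟨⟨e1.1, e1.2⟩, by constructor <;> linarith [e2.1, e2.2]⟩
  · rintro ⟨⟨h1, h2⟩, h3, h4⟩
    have e1 : z^2 < R^2 - x^2 := Real.sq_lt.2 ⟨h1, h2⟩
    have e2 : (z - c)^2 < y^2 - x^2 := Real.sq_lt.2 ⟨by linarith, by linarith⟩
    constructor <;> linarith

private lemma vol2_mono (R y a b : ℝ) (ha : 0 ≤ a) (hab : a ≤ b) :
    volume (Sset R y b) ≤ volume (Sset R y a) := by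
  rw [Measure.volume_eq_prod, Measure.prod_apply (Sset_meas R y b),
      Measure.prod_apply (Sset_meas R y a)]
  refine lintegral_mono fun x => ?_
  rw [slice_eq, slice_eq, Ioo_inter_Ioo, Ioo_inter_Ioo, Real.volume_Ioo, Real.volume_Ioo]
  exact ENNReal.ofReal_le_ofReal
    (minmax_ineq (Real.sqrt (R^2 - x^2)) (Real.sqrt (y^2 - x^2)) a b ha hab)

noncomputable def eE : EuclideanSpace ℝ (Fin 2) := EuclideanSpace.single 1 1

private lemma transfer (R y c : ℝ) (hR : 0 < R) (hy : 0 < y) :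
    volume (ball (0 : EuclideanSpace ℝ (Fin 2)) R ∩ ball (c • eE) y) = volume (Sset R y c) := by
  set φ : EuclideanSpace ℝ (Fin 2) ≃ᵐ ℝ × ℝ :=
    (MeasurableEquiv.toLp 2 (Fin 2 → ℝ)).symm.trans MeasurableEquiv.finTwoArrow with hφ
  have hmp : MeasurePreserving φ volume volume :=
    (volume_preserving_finTwoArrow ℝ).comp
      (EuclideanSpace.volume_preserving_symm_measurableEquiv_toLp (Fin 2))
  have hset : ball (0 : EuclideanSpace ℝ (Fin 2)) R ∩ ball (c • eE) y = φ ⁻¹' (Sset R y c) := by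
    ext x
    have hce0 : (c • eE) 0 = 0 := by simp [eE, EuclideanSpace.single_apply]
    have hce1 : (c • eE) 1 = c := by simp [eE, EuclideanSpace.single_apply]
    have hφx : φ x = (x 0, x 1) := rfl
    simp only [mem_inter_iff, mem_ball, mem_preimage, Sset, mem_setOf_eq, hφx,
      EuclideanSpace.dist_eq, Fin.sum_univ_two, hce0, hce1, Real.sqrt_lt' hR, Real.sqrt_lt' hy]
    simp [Real.dist_eq, sq_abs]
  rw [hset, hmp.measure_preimage (Sset_meas R y c).nullMeasurableSet]

private lemma reduce (R y : ℝ) (t q : EuclideanSpace ℝ (Fin 2)) :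
    volume (ball t R ∩ ball q y) =
      volume (ball (0 : EuclideanSpace ℝ (Fin 2)) R ∩ ball ((dist t q) • eE) y) := by
  set b := dist t q with hb
  have hb0 : 0 ≤ b := dist_nonneg
  have hnorm : ‖q - t‖ = ‖b • eE‖ := by
    rw [norm_smul, ← dist_eq_norm, dist_comm]
    simp [eE, EuclideanSpace.norm_single, Real.norm_eq_abs, abs_of_nonneg hb0, hb]
  set L := Submodule.reflection (ℝ ∙ ((q - t) - b • eE))ᗮ with hL
  have hLqt : L (q - t) = b • eE := Submodule.reflection_sub hnorm
  have hL0 : L 0 = 0 := map_zero L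
  set f : EuclideanSpace ℝ (Fin 2) → EuclideanSpace ℝ (Fin 2) := fun x => L (x - t) with hf
  have hmp : MeasurePreserving f volume volume :=
    L.measurePreserving.comp (measurePreserving_sub_right volume t)
  have hset : ball t R ∩ ball q y
      = f ⁻¹' (ball (0 : EuclideanSpace ℝ (Fin 2)) R ∩ ball (b • eE) y) := by
    ext x
    simp only [mem_inter_iff, mem_ball, mem_preimage, hf]
    rw [← hL0, ← hLqt, L.dist_map, L.dist_map]
    rw [show dist (x - t) (0 : EuclideanSpace ℝ (Fin 2)) = dist x t by simp [dist_eq_norm],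
        dist_sub_right]
  rw [hset, hmp.measure_preimage ((isOpen_ball.inter isOpen_ball).measurableSet).nullMeasurableSet]

/-- The area of intersection of two disks of fixed radii in the Euclidean plane is
nonincreasing in the distance between their centers. -/
theorem stmt_6 (R y : ℝ) (hR : 0 < R) (hy : 0 < y)
    (t p q : EuclideanSpace ℝ (Fin 2)) (h : dist t p ≤ dist t q) :
    volume (ball t R ∩ ball q y) ≤ volume (ball t R ∩ ball p y) := by
  rw [reduce R y t q, reduce R y t p, transfer R y _ hR hy, transfer R y _ hR hy]
  exact vol2_mono R y (dist t p) (dist t q) dist_nonneg h
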